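/- In the braid group B₂(Σ₁,₀) presented as G = ⟨a, b, c ∣ a²b = ba², b²a = ab², a²c = ca², b²c = cb², a²b² = c²⟩, every element g can be written uniquely as g = c^{-2j}·ι(m) where j ∈ ℤ, m is an element of the positive monoid M with the same presentation not left-divisible by c², and ι : M → G is the canonical map. -/

import Mathlib

/-- Relations of the presentation `⟨a,b,c ∣ a²b=ba², b²a=ab², a²c=ca², b²c=cb², a²b²=c²⟩`
of the braid group `B₂(Σ_{1,0})`, as elements of the free group on `a = 0`, `b = 1`, `c = 2`. -/
def grels : Set (FreeGroup (Fin 3)) :=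
  { FreeGroup.of 0 ^ 2 * FreeGroup.of 1 * (FreeGroup.of 1 * FreeGroup.of 0 ^ 2)⁻¹,
    FreeGroup.of 1 ^ 2 * FreeGroup.of 0 * (FreeGroup.of 0 * FreeGroup.of 1 ^ 2)⁻¹,
    FreeGroup.of 0 ^ 2 * FreeGroup.of 2 * (FreeGroup.of 2 * FreeGroup.of 0 ^ 2)⁻¹,
    FreeGroup.of 1 ^ 2 * FreeGroup.of 2 * (FreeGroup.of 2 * FreeGroup.of 1 ^ 2)⁻¹,
    FreeGroup.of 0 ^ 2 * FreeGroup.of 1 ^ 2 * (FreeGroup.of 2 ^ 2)⁻¹ }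

/-- Relations `a² = b² = c² = 1` of the universal Coxeter group `W(a,b,c)`. -/
def wrels : Set (FreeGroup (Fin 3)) :=
  { FreeGroup.of 0 ^ 2, FreeGroup.of 1 ^ 2, FreeGroup.of 2 ^ 2 }

/-- The braid group `B₂(Σ_{1,0})` via the presentation above. -/
abbrev G := PresentedGroup grels

/-- The universal Coxeter group `W(a,b,c) = ℤ/2 * ℤ/2 * ℤ/2`. -/
abbrev W := PresentedGroup wrels

def ga : G := PresentedGroup.of 0
def gb : G := PresentedGroup.of 1
def gc : G := PresentedGroup.of 2
def wa : W := PresentedGroup.of 0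
def wb : W := PresentedGroup.of 1
def wc : W := PresentedGroup.of 2
/-- The defining relations of the positive monoid presentation
`⟨a,b,c ∣ a²b=ba², b²a=ab², a²c=ca², b²c=cb², a²b²=c²⟩⁺`, on the free monoid
on `a = 0`, `b = 1`, `c = 2`. -/
inductive mrels : FreeMonoid (Fin 3) → FreeMonoid (Fin 3) → Prop
  | ab : mrels (.of 0 * .of 0 * .of 1) (.of 1 * (.of 0 * .of 0))
  | ba : mrels (.of 1 * .of 1 * .of 0) (.of 0 * (.of 1 * .of 1))
  | ac : mrels (.of 0 * .of 0 * .of 2) (.of 2 * (.of 0 * .of 0))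
  | bc : mrels (.of 1 * .of 1 * .of 2) (.of 2 * (.of 1 * .of 1))
  | c2 : mrels (.of 0 * .of 0 * (.of 1 * .of 1)) (.of 2 * .of 2)

/-- The positive monoid `B₂⁺(Σ_{1,0})` given by the presentation above. -/
abbrev M := PresentedMonoid mrels

def ma : M := PresentedMonoid.of mrels 0
def mb : M := PresentedMonoid.of mrels 1
def mc : M := PresentedMonoid.of mrels 2

abbrev Red := {l : List (Fin 3) // l.Chain' (· ≠ ·)}
abbrev NN := ℤ × ℤ × Red

def dd : Fin 3 → ℤ × ℤ := fun x => if x = 0 then (1,0) else if x = 1 then (0,1) else (1,1)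

def ptN : NN := (0, 0, ⟨[], List.isChain_nil⟩)

def eact (x : Fin 3) : NN → NN
  | (i, k, ⟨[], _⟩) => (i, k, ⟨[x], List.isChain_singleton x⟩)
  | (i, k, ⟨y :: t, h⟩) =>
    if hyx : y = x then (i + (dd x).1, k + (dd x).2, ⟨t, h.tail⟩)
    else (i, k, ⟨x :: y :: t, List.isChain_cons_cons.mpr ⟨fun he => hyx he.symm, h⟩⟩)

def ebact (x : Fin 3) : NN → NN
  | (i, k, ⟨[], _⟩) => (i - (dd x).1, k - (dd x).2, ⟨[x], List.isChain_singleton x⟩)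
  | (i, k, ⟨y :: t, h⟩) =>
    if hyx : y = x then (i, k, ⟨t, h.tail⟩)
    else (i - (dd x).1, k - (dd x).2, ⟨x :: y :: t, List.isChain_cons_cons.mpr ⟨fun he => hyx he.symm, h⟩⟩)

lemma eact_nil (x : Fin 3) (i k : ℤ) (h) : eact x (i, k, ⟨[], h⟩) = (i, k, ⟨[x], List.isChain_singleton x⟩) := rfl

lemma eact_cons_self (x : Fin 3) (i k : ℤ) (t h) :
    eact x (i, k, ⟨x :: t, h⟩) = (i + (dd x).1, k + (dd x).2, ⟨t, h.tail⟩) := by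
  simp [eact]

lemma eact_cons_ne (x y : Fin 3) (hxy : y ≠ x) (i k : ℤ) (t h) :
    eact x (i, k, ⟨y :: t, h⟩) = (i, k, ⟨x :: y :: t, List.isChain_cons_cons.mpr ⟨fun he => hxy he.symm, h⟩⟩) := by
  simp [eact, hxy]

def eqv (x : Fin 3) : Equiv.Perm NN where
  toFun := eact x
  invFun := ebact x
  left_inv := by
    rintro ⟨i, k, ⟨l, h⟩⟩
    match l, h with
    | [], h => simp [eact, ebact]
    | y :: t, h =>
      by_cases hyx : y = x
      · subst hyx
        match t, h with
        | [], h => simp [eact, ebact]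
        | z :: t', h =>
          have hz : z ≠ y := (List.isChain_cons_cons.mp h).1.symm
          simp [eact, ebact, hz, Ne.symm hz]
      · simp [eact, ebact, hyx]
  right_inv := by
    rintro ⟨i, k, ⟨l, h⟩⟩
    match l, h with
    | [], h => simp [eact, ebact]
    | y :: t, h =>
      by_cases hyx : y = x
      · subst hyx
        match t, h with
        | [], h => simp [eact, ebact]
        | z :: t', h =>
          have hz : z ≠ y := (List.isChain_cons_cons.mp h).1.symm
          simp [eact, ebact, hz, Ne.symm hz]
      · simp [eact, ebact, hyx]

def trN (d : ℤ × ℤ) : Equiv.Perm NN :=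
  (Equiv.addLeft d.1).prodCongr ((Equiv.addLeft d.2).prodCongr (Equiv.refl _))

lemma trN_apply (d : ℤ × ℤ) (n : NN) : trN d n = (d.1 + n.1, d.2 + n.2.1, n.2.2) := rfl

lemma eqv_sq (x : Fin 3) (n : NN) : eqv x (eqv x n) = trN (dd x) n := by
  obtain ⟨i, k, ⟨l, h⟩⟩ := n
  match l, h with
  | [], h => simp [eqv, eact, trN_apply]; constructor <;> ring
  | y :: t, h =>
    by_cases hyx : y = x
    · subst hyx
      match t, h with
      | [], h => simp [eqv, eact, trN_apply]; constructor <;> ring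
      | z :: t', h =>
        have hz : z ≠ y := (List.isChain_cons_cons.mp h).1.symm
        simp [eqv, eact, hz, trN_apply]; constructor <;> ring
    · simp [eqv, eact, hyx, trN_apply]; constructor <;> ring

lemma eqv_trN (x : Fin 3) (d : ℤ × ℤ) (n : NN) : eqv x (trN d n) = trN d (eqv x n) := by
  obtain ⟨i, k, ⟨l, h⟩⟩ := n
  match l, h with
  | [], h => simp [eqv, eact, trN_apply]
  | y :: t, h =>
    by_cases hyx : y = x
    · subst hyx; simp [eqv, eact, trN_apply]; constructor <;> ring
    · simp [eqv, eact, hyx, trN_apply]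

lemma trN_mul (d e : ℤ × ℤ) : trN d * trN e = trN (d + e) := by
  ext n <;> simp [trN_apply, Equiv.Perm.mul_apply] <;> ring

lemma eqv_sq' (x : Fin 3) : eqv x * eqv x = trN (dd x) := by
  ext n <;> rw [Equiv.Perm.mul_apply, eqv_sq]

lemma sq_comm (x y : Fin 3) : eqv x ^ 2 * eqv y = eqv y * eqv x ^ 2 := by
  rw [sq, eqv_sq']
  ext n <;> rw [Equiv.Perm.mul_apply, Equiv.Perm.mul_apply, eqv_trN]

lemma grels_lift : ∀ r ∈ grels, FreeGroup.lift eqv r = 1 := by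
  intro r hr
  have key : ∀ x y : Fin 3, FreeGroup.lift eqv
      (FreeGroup.of x ^ 2 * FreeGroup.of y * (FreeGroup.of y * FreeGroup.of x ^ 2)⁻¹) = 1 := by
    intro x y
    rw [map_mul, map_inv, map_mul, map_pow, map_mul, map_pow, FreeGroup.lift_apply_of, FreeGroup.lift_apply_of]
    rw [mul_inv_eq_one, sq_comm]
  rcases hr with h | h | h | h | h
  · rw [h]; exact key 0 1
  · rw [h]; exact key 1 0
  · rw [h]; exact key 0 2
  · rw [h]; exact key 1 2
  · rw [h, map_mul, map_inv, map_mul, map_pow, map_pow, map_pow, FreeGroup.lift_apply_of,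
      FreeGroup.lift_apply_of, FreeGroup.lift_apply_of, mul_inv_eq_one, sq, sq, sq, eqv_sq', eqv_sq',
      eqv_sq', trN_mul]
    rfl

def Phi : G →* Equiv.Perm NN := PresentedGroup.toGroup grels_lift

lemma Phi_of (x : Fin 3) : Phi (PresentedGroup.of x) = eqv x := PresentedGroup.toGroup.of grels_lift

-- relations in G
lemma gr_mem (r : FreeGroup (Fin 3)) (hr : r ∈ grels) : PresentedGroup.mk grels r = 1 :=
  (QuotientGroup.eq_one_iff r).mpr (Subgroup.subset_normalClosure hr)

lemma g_sq_comm (x y : Fin 3) (h : FreeGroup.of x ^ 2 * FreeGroup.of y *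
    (FreeGroup.of y * FreeGroup.of x ^ 2)⁻¹ ∈ grels) :
    (PresentedGroup.of x : G) ^ 2 * PresentedGroup.of y
      = PresentedGroup.of y * PresentedGroup.of x ^ 2 := by
  have := gr_mem _ h
  rw [map_mul, map_inv, map_mul, map_pow, map_mul, map_pow, mul_inv_eq_one] at this
  exact this

lemma gab : ga ^ 2 * gb = gb * ga ^ 2 := g_sq_comm 0 1 (by left; rfl)
lemma gba : gb ^ 2 * ga = ga * gb ^ 2 := g_sq_comm 1 0 (by right; left; rfl)
lemma gac : ga ^ 2 * gc = gc * ga ^ 2 := g_sq_comm 0 2 (by right; right; left; rfl)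
lemma gbc : gb ^ 2 * gc = gc * gb ^ 2 := g_sq_comm 1 2 (by right; right; right; left; rfl)
lemma gc2 : gc ^ 2 = ga ^ 2 * gb ^ 2 := by
  have := gr_mem _ (show _ ∈ grels by right; right; right; right; rfl)
  rw [map_mul, map_inv, map_mul, map_pow, map_pow, map_pow, mul_inv_eq_one] at this
  exact this.symm

lemma comm_ga2 : ∀ g : G, Commute (ga ^ 2) g := by
  intro g
  have : g ∈ Subgroup.centralizer {ga ^ 2} := by
    refine PresentedGroup.generated_by grels _ (fun j => ?_) g
    rw [Subgroup.mem_centralizer_singleton_iff]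
    fin_cases j
    · show ga ^ 2 * ga = ga * ga ^ 2; rw [sq]; group
    · exact gab.symm
    · exact gac.symm
  exact (Subgroup.mem_centralizer_singleton_iff.mp this).symm

lemma comm_gb2 : ∀ g : G, Commute (gb ^ 2) g := by
  intro g
  have : g ∈ Subgroup.centralizer {gb ^ 2} := by
    refine PresentedGroup.generated_by grels _ (fun j => ?_) g
    rw [Subgroup.mem_centralizer_singleton_iff]
    fin_cases j
    · exact gba.symm
    · show gb ^ 2 * gb = gb * gb ^ 2; rw [sq]; group
    · exact gbc.symm
  exact (Subgroup.mem_centralizer_singleton_iff.mp this).symm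

lemma comm_gc2 (g : G) : Commute (gc ^ 2) g := by
  rw [gc2]; exact (comm_ga2 g).mul_left (comm_gb2 g)

lemma comm_gc2z (z : ℤ) (g : G) : gc ^ (2 * z) * g = g * gc ^ (2 * z) := by
  have : gc ^ (2 * z) = (gc ^ 2) ^ z := by rw [zpow_mul, zpow_ofNat]
  rw [this]
  exact ((comm_gc2 g).zpow_left z).eq

lemma msound {u v : FreeMonoid (Fin 3)} (h : mrels u v) :
    PresentedMonoid.mk mrels u = PresentedMonoid.mk mrels v :=
  Quotient.sound (ConGen.Rel.of u v h)

lemma m_ab : ma * ma * mb = mb * (ma * ma) := msound mrels.ab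
lemma m_ba : mb * mb * ma = ma * (mb * mb) := msound mrels.ba
lemma m_ac : ma * ma * mc = mc * (ma * ma) := msound mrels.ac
lemma m_bc : mb * mb * mc = mc * (mb * mb) := msound mrels.bc
lemma m_c2 : ma * ma * (mb * mb) = mc * mc := msound mrels.c2

lemma mgen (x : Fin 3) : PresentedMonoid.of mrels x = ma ∨ PresentedMonoid.of mrels x = mb ∨
    PresentedMonoid.of mrels x = mc := by fin_cases x <;> simp [ma, mb, mc]

lemma comm_ma2 (m : M) : Commute (ma * ma) m := by
  induction m using PresentedMonoid.inductionOn with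
  | h a =>
    induction a using FreeMonoid.inductionOn' with
    | one => exact Commute.one_right _
    | of_mul x xs ih =>
      rw [map_mul]
      refine Commute.mul_right ?_ ih
      rcases mgen x with h | h | h <;> rw [show PresentedMonoid.mk mrels (FreeMonoid.of x) =
        PresentedMonoid.of mrels x from rfl, h]
      · exact Commute.refl _ |>.mul_left (Commute.refl _)
      · exact m_ab
      · exact m_ac

lemma comm_mb2 (m : M) : Commute (mb * mb) m := by
  induction m using PresentedMonoid.inductionOn with
  | h a =>
    induction a using FreeMonoid.inductionOn' with
    | one => exact Commute.one_right _
    | of_mul x xs ih =>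
      rw [map_mul]
      refine Commute.mul_right ?_ ih
      rcases mgen x with h | h | h <;> rw [show PresentedMonoid.mk mrels (FreeMonoid.of x) =
        PresentedMonoid.of mrels x from rfl, h]
      · exact m_ba
      · exact Commute.refl _ |>.mul_left (Commute.refl _)
      · exact m_bc

-- the word product and normal form in M
def wprod (w : List (Fin 3)) : M := (w.map (fun x => PresentedMonoid.of mrels x)).prod

lemma wprod_nil : wprod [] = 1 := rfl
lemma wprod_cons (x : Fin 3) (w : List (Fin 3)) :
    wprod (x :: w) = PresentedMonoid.of mrels x * wprod w := by simp [wprod]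

def psi (i k : ℕ) (w : List (Fin 3)) : M := (ma * ma) ^ i * ((mb * mb) ^ k * wprod w)

lemma comm_shift {u v m : M} (h : Commute u v) : u * (v * m) = v * (u * m) := by
  rw [← mul_assoc, h.eq, mul_assoc]

lemma step_ne (x : Fin 3) (i k : ℕ) (w : List (Fin 3)) :
    PresentedMonoid.of mrels x * psi i k w = psi i k (x :: w) := by
  unfold psi
  rw [wprod_cons, comm_shift (((comm_ma2 (PresentedMonoid.of mrels x)).pow_left i).symm),
    comm_shift (((comm_mb2 (PresentedMonoid.of mrels x)).pow_left k).symm)]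

lemma step_a (i k : ℕ) (w : List (Fin 3)) :
    ma * psi i k ((0 : Fin 3) :: w) = psi (i + 1) k w := by
  unfold psi
  rw [wprod_cons, show PresentedMonoid.of mrels (0 : Fin 3) = ma from rfl]
  rw [comm_shift (((comm_ma2 ma).pow_left i).symm), comm_shift (((comm_mb2 ma).pow_left k).symm),
    ← mul_assoc ma ma, comm_shift ((comm_mb2 (ma * ma)).pow_left k),
    ← mul_assoc ((ma * ma) ^ i), ← pow_succ]

lemma step_b (i k : ℕ) (w : List (Fin 3)) :
    mb * psi i k ((1 : Fin 3) :: w) = psi i (k + 1) w := by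
  unfold psi
  rw [wprod_cons, show PresentedMonoid.of mrels (1 : Fin 3) = mb from rfl]
  rw [comm_shift (((comm_ma2 mb).pow_left i).symm), comm_shift (((comm_mb2 mb).pow_left k).symm),
    ← mul_assoc mb mb, ← mul_assoc ((mb * mb) ^ k), ← pow_succ]

lemma step_c (i k : ℕ) (w : List (Fin 3)) :
    mc * psi i k ((2 : Fin 3) :: w) = psi (i + 1) (k + 1) w := by
  unfold psi
  rw [wprod_cons, show PresentedMonoid.of mrels (2 : Fin 3) = mc from rfl]
  rw [comm_shift (((comm_ma2 mc).pow_left i).symm), comm_shift (((comm_mb2 mc).pow_left k).symm),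
    ← mul_assoc mc mc, ← m_c2, mul_assoc (ma * ma) (mb * mb),
    comm_shift ((comm_mb2 (ma * ma)).pow_left k), ← mul_assoc ((mb * mb) ^ k), ← pow_succ,
    ← mul_assoc ((ma * ma) ^ i), ← pow_succ]

lemma psi_c2 (i k : ℕ) (w : List (Fin 3)) :
    psi (i + 1) (k + 1) w = mc ^ 2 * psi i k w := by
  symm
  unfold psi
  rw [sq, ← m_c2, mul_assoc (ma * ma) (mb * mb),
    comm_shift (((comm_ma2 (mb * mb)).pow_left i).symm),
    comm_shift ((Commute.refl (ma * ma)).pow_right i),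
    comm_shift ((Commute.refl (mb * mb)).pow_right k),
    ← mul_assoc ((mb * mb) ^ k), ← pow_succ,
    ← mul_assoc ((ma * ma) ^ i), ← pow_succ]

lemma trN_pow (d : ℤ × ℤ) (n : ℕ) : trN d ^ n = trN (n • d) := by
  induction n with
  | zero => ext m <;> simp [trN_apply]
  | succ j ih => rw [pow_succ, ih, trN_mul]; congr 1; push_cast; module

section
variable (ι : M →* G) (hιa : ι ma = ga) (hιb : ι mb = gb) (hιc : ι mc = gc)
include hιa hιb hιc

lemma iota_of (x : Fin 3) : ι (PresentedMonoid.of mrels x) = PresentedGroup.of x := by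
  fin_cases x
  · exact hιa
  · exact hιb
  · exact hιc

lemma phi_word (w : List (Fin 3)) : ∀ (hw : w.Chain' (· ≠ ·)),
    Phi (ι (wprod w)) ptN = (0, 0, ⟨w, hw⟩) := by
  induction w with
  | nil => intro hw; rw [wprod_nil, map_one, map_one]; rfl
  | cons x t ih =>
    intro hw
    rw [wprod_cons, map_mul, map_mul, Equiv.Perm.mul_apply, iota_of ι hιa hιb hιc, Phi_of,
      ih hw.tail]
    match t, hw with
    | [], hw => rw [show ∀ n, eqv x n = eact x n from fun _ => rfl]; exact eact_nil x 0 0 _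
    | z :: t', hw =>
      have hz : z ≠ x := (List.isChain_cons_cons.mp hw).1.symm
      rw [show ∀ n, eqv x n = eact x n from fun _ => rfl]; exact eact_cons_ne x z hz 0 0 t' _

lemma phi_psi (i k : ℕ) (w : List (Fin 3)) (hw : w.Chain' (· ≠ ·)) :
    Phi (ι (psi i k w)) ptN = ((i : ℤ), (k : ℤ), ⟨w, hw⟩) := by
  unfold psi
  simp only [map_mul, map_pow]
  rw [hιa, hιb]
  show ((Phi ga * Phi ga) ^ i) (((Phi gb * Phi gb) ^ k) (Phi (ι (wprod w)) ptN)) = _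
  rw [phi_word ι hιa hιb hιc w hw,
    show Phi ga = eqv 0 from Phi_of 0, show Phi gb = eqv 1 from Phi_of 1,
    eqv_sq', eqv_sq', trN_pow, trN_pow, trN_apply, trN_apply]
  simp [dd]

omit hιa hιb hιc in
lemma eqv_apply (x : Fin 3) (n : NN) : eqv x n = eact x n := rfl

lemma BOX (m : M) : ∃ (i k : ℕ) (w : List (Fin 3)) (hw : w.Chain' (· ≠ ·)),
    Phi (ι m) ptN = ((i : ℤ), (k : ℤ), ⟨w, hw⟩) ∧ m = psi i k w := by
  induction m using PresentedMonoid.inductionOn with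
  | h a =>
    induction a using FreeMonoid.inductionOn' with
    | one =>
      refine ⟨0, 0, [], List.isChain_nil, ?_, ?_⟩
      · rw [map_one, map_one, map_one]; rfl
      · simp [psi, wprod_nil]
    | of_mul x xs ih =>
      obtain ⟨i, k, w, hw, heq, hpsi⟩ := ih
      have hmk : (PresentedMonoid.mk mrels) (FreeMonoid.of x * xs)
          = PresentedMonoid.of mrels x * PresentedMonoid.mk mrels xs := rfl
      have hphi : Phi (ι ((PresentedMonoid.mk mrels) (FreeMonoid.of x * xs))) ptN
          = eact x ((i : ℤ), (k : ℤ), ⟨w, hw⟩) := by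
        rw [hmk, map_mul, map_mul, Equiv.Perm.mul_apply, heq, iota_of ι hιa hιb hιc, Phi_of,
          eqv_apply]
      match w, hw with
      | [], hw =>
        refine ⟨i, k, [x], List.isChain_singleton x, ?_, ?_⟩
        · rw [hphi, eact_nil]
        · rw [hmk, hpsi, step_ne]
      | y :: t, hw =>
        by_cases hyx : y = x
        · subst hyx
          fin_cases y
          · exact ⟨i + 1, k, t, hw.tail, by rw [hphi, eact_cons_self]; simp [dd],
              by rw [hmk, hpsi]; exact step_a i k t⟩
          · exact ⟨i, k + 1, t, hw.tail, by rw [hphi, eact_cons_self]; simp [dd],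
              by rw [hmk, hpsi]; exact step_b i k t⟩
          · exact ⟨i + 1, k + 1, t, hw.tail, by rw [hphi, eact_cons_self]; simp [dd],
              by rw [hmk, hpsi]; exact step_c i k t⟩
        · refine ⟨i, k, x :: y :: t, List.isChain_cons_cons.mpr ⟨fun he => hyx he.symm, hw⟩, ?_, ?_⟩
          · rw [hphi, eact_cons_ne x y hyx]
          · rw [hmk, hpsi, step_ne]

lemma inv_a : ga⁻¹ = gc ^ (2 * (-1 : ℤ)) * ι (mb * (mb * ma)) := by
  have claim : ga * (gb * (gb * ga)) = gc ^ 2 := by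
    rw [show gb * (gb * ga) = gb ^ 2 * ga by rw [sq, mul_assoc], gba, ← mul_assoc, ← sq, gc2]
  rw [map_mul, map_mul, hιa, hιb, inv_eq_iff_mul_eq_one, ← mul_assoc, ← comm_gc2z (-1) ga,
    mul_assoc, claim, show (2 * (-1) : ℤ) = -2 from rfl, zpow_neg, zpow_ofNat, inv_mul_cancel]

lemma inv_b : gb⁻¹ = gc ^ (2 * (-1 : ℤ)) * ι (ma * (ma * mb)) := by
  have claim : gb * (ga * (ga * gb)) = gc ^ 2 := by
    rw [show ga * (ga * gb) = ga ^ 2 * gb by rw [sq, mul_assoc], gab, ← mul_assoc, ← sq,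
      ← (comm_ga2 (gb ^ 2)).eq, gc2]
  rw [map_mul, map_mul, hιa, hιb, inv_eq_iff_mul_eq_one, ← mul_assoc, ← comm_gc2z (-1) gb,
    mul_assoc, claim, show (2 * (-1) : ℤ) = -2 from rfl, zpow_neg, zpow_ofNat, inv_mul_cancel]

lemma inv_c : gc⁻¹ = gc ^ (2 * (-1 : ℤ)) * ι mc := by
  rw [hιc, show (2 * (-1) : ℤ) = -2 from rfl]
  group

lemma EXIST1 (g : G) : ∃ (t : ℤ) (m : M), g = gc ^ (2 * t) * ι m := by
  induction g using PresentedGroup.induction_on with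
  | H z =>
  refine FreeGroup.induction_on z ?_ ?_ ?_ ?_
  · exact ⟨0, 1, by simp⟩
  · intro x
    refine ⟨0, PresentedMonoid.of mrels x, ?_⟩
    rw [iota_of ι hιa hιb hιc]
    simp
    rfl
  · intro x _
    rw [map_inv]
    fin_cases x
    · exact ⟨-1, mb * (mb * ma), inv_a ι hιa hιb hιc⟩
    · exact ⟨-1, ma * (ma * mb), inv_b ι hιa hιb hιc⟩
    · exact ⟨-1, mc, inv_c ι hιa hιb hιc⟩
  · rintro z1 z2 ⟨t, m, h⟩ ⟨s, m', h'⟩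
    refine ⟨t + s, m * m', ?_⟩
    have : PresentedGroup.mk grels (z1 * z2) = PresentedGroup.mk grels z1 *
      PresentedGroup.mk grels z2 := map_mul _ _ _
    rw [this, h, h', map_mul, mul_assoc, ← mul_assoc (ι m), ← comm_gc2z s (ι m),
      mul_assoc, ← mul_assoc, ← zpow_add, show 2 * t + 2 * s = 2 * (t + s) by ring]

omit hιa hιb hιc in
lemma trN_one : trN (0, 0) = 1 := by
  ext n <;> simp [trN_apply]

omit hιa hιb hιc in
lemma trN_inv (d : ℤ × ℤ) : (trN d)⁻¹ = trN (-d) := by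
  refine inv_eq_of_mul_eq_one_right ?_
  rw [trN_mul]
  simp only [add_neg_cancel]
  exact trN_one

omit hιa hιb hιc in
lemma trN11_zpow (z : ℤ) : (trN (1, 1)) ^ z = trN (z, z) := by
  cases z with
  | ofNat n =>
    rw [Int.ofNat_eq_coe, zpow_natCast, trN_pow]
    congr 1
    simp [Prod.ext_iff]
  | negSucc n =>
    rw [zpow_negSucc, trN_pow, trN_inv]
    congr 1
    simp [Prod.ext_iff, Int.negSucc_eq]

omit hιa hιb hιc in
lemma phi_gc_zpow (y : ℤ) : Phi (gc ^ (2 * y)) = trN (y, y) := by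
  rw [map_zpow, show Phi gc = eqv 2 from Phi_of 2, zpow_mul, zpow_ofNat, sq, eqv_sq',
    show dd 2 = (1, 1) by simp [dd], trN11_zpow]

omit hιa hιb hιc in
lemma phi_gc2 : Phi (gc ^ (2 : ℕ)) = trN (1, 1) := by
  rw [← zpow_natCast gc 2, show ((2:ℕ):ℤ) = 2 * 1 by norm_num, phi_gc_zpow]

omit hιa hιb hιc in
lemma psi_split (d i k : ℕ) (w : List (Fin 3)) :
    psi (i + d) (k + d) w = (mc ^ 2) ^ d * psi i k w := by
  induction d with
  | zero => simp
  | succ e ih =>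
    rw [show i + (e + 1) = (i + e) + 1 by ring, show k + (e + 1) = (k + e) + 1 by ring,
      psi_c2, ih, ← mul_assoc, ((Commute.refl (mc ^ 2)).pow_right e).eq, ← pow_succ]

omit hιa hιb hιc in
lemma nondiv_min (m : M) (i k : ℕ) (w : List (Fin 3)) (hpsi : m = psi i k w)
    (hnd : ¬∃ m' : M, m = mc ^ 2 * m') : i = 0 ∨ k = 0 := by
  by_contra h
  push_neg at h
  obtain ⟨h1, h2⟩ := h
  refine hnd ⟨psi (i - 1) (k - 1) w, ?_⟩
  rw [hpsi, show i = (i - 1) + 1 by omega, show k = (k - 1) + 1 by omega, psi_c2]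
  congr 1 <;> omega

lemma div_phi (m : M) (hd : ∃ m' : M, m = mc ^ 2 * m') :
    ∃ (i' k' : ℕ) (r : Red), Phi (ι m) ptN = ((i' : ℤ) + 1, (k' : ℤ) + 1, r) := by
  obtain ⟨m', rfl⟩ := hd
  obtain ⟨i', k', w', hw', heq', _⟩ := BOX ι hιa hιb hιc m'
  refine ⟨i', k', ⟨w', hw'⟩, ?_⟩
  rw [map_mul, map_mul, Equiv.Perm.mul_apply, heq', map_pow, hιc, phi_gc2, trN_apply]
  simp [add_comm]

lemma UNIQ (j1 j2 : ℤ) (m1 m2 : M) (hnd1 : ¬∃ m' : M, m1 = mc ^ 2 * m')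
    (hnd2 : ¬∃ m' : M, m2 = mc ^ 2 * m')
    (h : gc ^ (-(2 * j1)) * ι m1 = gc ^ (-(2 * j2)) * ι m2) : j1 = j2 ∧ m1 = m2 := by
  obtain ⟨i1, k1, w1, hw1, heq1, hpsi1⟩ := BOX ι hιa hιb hιc m1
  obtain ⟨i2, k2, w2, hw2, heq2, hpsi2⟩ := BOX ι hιa hιb hιc m2
  have min1 := nondiv_min m1 i1 k1 w1 hpsi1 hnd1
  have min2 := nondiv_min m2 i2 k2 w2 hpsi2 hnd2
  have key : ∀ (j : ℤ) (m : M) (i k : ℕ) (w : List (Fin 3)) (hw : w.Chain' (· ≠ ·)),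
      Phi (ι m) ptN = ((i : ℤ), (k : ℤ), ⟨w, hw⟩) →
      Phi (gc ^ (-(2 * j)) * ι m) ptN = (-j + i, -j + k, ⟨w, hw⟩) := by
    intro j m i k w hw he
    rw [map_mul, Equiv.Perm.mul_apply, he, show (-(2 * j)) = 2 * (-j) by ring, phi_gc_zpow,
      trN_apply]
  have H := (key j1 m1 i1 k1 w1 hw1 heq1).symm.trans
    ((congrArg (fun u => Phi u ptN) h).trans (key j2 m2 i2 k2 w2 hw2 heq2))
  simp only [Prod.mk.injEq, Subtype.mk.injEq] at H
  obtain ⟨e1, e2, e3⟩ := H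
  have hj : j1 = j2 := by rcases min1 with h' | h' <;> rcases min2 with h'' | h'' <;> omega
  have hi : i1 = i2 := by omega
  have hk : k1 = k2 := by omega
  exact ⟨hj, by rw [hpsi1, hpsi2, hi, hk, e3]⟩

lemma MAIN (g : G) :
    ∃! x : ℤ × M, (¬ ∃ m' : M, x.2 = mc ^ 2 * m') ∧ g = gc ^ (-(2 * x.1)) * ι x.2 := by
  obtain ⟨t, m, hg⟩ := EXIST1 ι hιa hιb hιc g
  obtain ⟨i, k, w, hw, heq, hpsi⟩ := BOX ι hιa hιb hιc m
  set d := min i k with hd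
  set m0 := psi (i - d) (k - d) w with hm0
  have hsplit : m = (mc ^ 2) ^ d * m0 := by
    rw [hpsi, show psi i k w = psi ((i - d) + d) ((k - d) + d) w by congr 1 <;> omega, psi_split]
  have hphi0 : Phi (ι m0) ptN = (((i - d : ℕ) : ℤ), ((k - d : ℕ) : ℤ), ⟨w, hw⟩) :=
    phi_psi ι hιa hιb hιc _ _ w hw
  have hnd0 : ¬∃ m' : M, m0 = mc ^ 2 * m' := by
    rintro ⟨m', hm'⟩
    obtain ⟨i', k', r, hphi'⟩ := div_phi ι hιa hιb hιc m0 ⟨m', hm'⟩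
    rw [hphi0] at hphi'
    simp only [Prod.mk.injEq] at hphi'
    obtain ⟨f1, f2, -⟩ := hphi'
    have : i - d = 0 ∨ k - d = 0 := by omega
    omega
  have hgeq : g = gc ^ (-(2 * (-(t + (d : ℤ))))) * ι m0 := by
    rw [hg, hsplit, map_mul, map_pow, map_pow, hιc, ← mul_assoc]
    congr 1
    rw [show (-(2 * (-(t + (d : ℤ))))) = 2 * t + 2 * (d : ℤ) by ring, zpow_add]
    congr 1
    rw [show gc ^ (2 * (d : ℤ)) = (gc ^ 2) ^ (d : ℤ) by rw [zpow_mul, zpow_ofNat],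
      zpow_natCast]
  refine ⟨(-(t + (d : ℤ)), m0), ⟨hnd0, hgeq⟩, ?_⟩
  rintro ⟨j', m'⟩ ⟨hnd', hg'⟩
  have := UNIQ ι hιa hιb hιc j' (-(t + (d : ℤ))) m' m0 hnd' hnd0 (by rw [← hg', ← hgeq])
  exact Prod.ext this.1 this.2

end

theorem stmt_19 (ι : M →* G) (hιa : ι ma = ga) (hιb : ι mb = gb) (hιc : ι mc = gc) (g : G) :
    ∃! x : ℤ × M, (¬ ∃ m' : M, x.2 = mc ^ 2 * m') ∧ g = gc ^ (-(2 * x.1)) * ι x.2 :=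
  MAIN ι hιa hιb hιc g
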